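/- If X and Y are real positive semidefinite symmetric matrices of the same size, then tr((XY)^n) ≥ 0 for every positive integer n. -/

import Mathlib

open Matrix
open scoped MatrixOrder

theorem trace_mul_pow_comm' (m : ℕ) (A B : Matrix (Fin m) (Fin m) ℝ) (k : ℕ) :
    ((A * B) ^ (k + 1)).trace = ((B * A) ^ (k + 1)).trace := by
  have h : SemiconjBy A (B * A) (A * B) := by
    simp [SemiconjBy, mul_assoc]
  have h1 : (A * B) ^ (k + 1) = A * (B * A) ^ k * B := by
    rw [pow_succ, ← mul_assoc, ← (h.pow_right k).eq, mul_assoc]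
  rw [h1, Matrix.trace_mul_comm, ← mul_assoc, ← pow_succ']

theorem posSemidef_trace_nonneg (m : ℕ) (P : Matrix (Fin m) (Fin m) ℝ)
    (hP : P.PosSemidef) : 0 ≤ P.trace := by
  rw [Matrix.trace]
  apply Finset.sum_nonneg
  intro i _
  have := hP.dotProduct_mulVec_nonneg (Pi.single i 1)
  simpa [Matrix.dotProduct_mulVec, dotProduct_single, single_dotProduct,
    Matrix.mulVec, Matrix.diag] using this

theorem trace_pow_mul_nonneg (m : ℕ) (X Y : Matrix (Fin m) (Fin m) ℝ)
    (hX : X.PosSemidef) (hY : Y.PosSemidef) (n : ℕ) (hn : 1 ≤ n) :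
    0 ≤ ((X * Y) ^ n).trace := by
  obtain ⟨k, rfl⟩ : ∃ k, n = k + 1 := ⟨n - 1, (Nat.succ_pred_eq_of_pos hn).symm⟩
  set S := CFC.sqrt X with hS
  have hSS : S * S = X := CFC.sqrt_mul_sqrt_self X hX.nonneg
  have hPSD : (S * Y * S).PosSemidef := by
    have h := hY.mul_mul_conjTranspose_same S
    rwa [Matrix.conjTranspose_eq_transpose_of_trivial, ← Matrix.conjTranspose_eq_transpose_of_trivial,
      (CFC.sqrt_nonneg X).posSemidef.isHermitian.eq] at h
  have hXY : X * Y = S * (S * Y) := by rw [← hSS, mul_assoc]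
  rw [hXY, trace_mul_pow_comm']
  exact posSemidef_trace_nonneg m _ (hPSD.pow (k + 1))
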